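/- arXiv:1602.08515 — 4 statements merged into one kernel-verified Lean document; each statement's English description precedes it below -/
import Mathlib

section
/- A feasible flow x in a directed graph with node supplies b and arc capacities U is an extreme point of the flow polyhedron P_F if and only if x is a cycle free solution, i.e., the set of free arcs (arcs a with 0 < x_a < U_a) contains no undirected cycle. -/
open scoped BigOperators

/-- Flow conservation: at each vertex, outflow minus inflow equals the supply. -/
def conserves {V A : Type*} [Fintype A] [DecidableEq V] (tail head : A → V)
    (b : V → ℝ) (x : A → ℝ) : Prop :=
  ∀ v : V,
    ((∑ a : A, if tail a = v then x a else 0) - ∑ a : A, if head a = v then x a else 0) = b v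

/-- The flow polyhedron: flows satisfying conservation, nonnegativity, and the capacity
bounds (`U a = none` means infinite capacity). -/
def flowPoly {V A : Type*} [Fintype A] [DecidableEq V] (tail head : A → V)
    (b : V → ℝ) (U : A → Option ℝ) : Set (A → ℝ) :=
  {x | conserves tail head b x ∧ ∀ a : A, 0 ≤ x a ∧ ∀ c ∈ U a, x a ≤ c}

/-- An arc is free for `x` if `0 < x a < U a`. -/
def IsFreeArc {A : Type*} (U : A → Option ℝ) (x : A → ℝ) (a : A) : Prop :=
  0 < x a ∧ ∀ c ∈ U a, x a < c

/-- The arc set `S` contains an undirected cycle: a closed walk of length at least one using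
pairwise distinct arcs of `S` (in either orientation) through pairwise distinct vertices. -/
def HasUndirCycle {V A : Type*} (tail head : A → V) (S : Set A) : Prop :=
  ∃ (k : ℕ) (arcs : Fin k → A) (vs : Fin (k + 1) → V),
    1 ≤ k ∧ Function.Injective arcs ∧
    Function.Injective (fun i : Fin k => vs i.castSucc) ∧
    vs (Fin.last k) = vs 0 ∧
    ∀ i : Fin k, arcs i ∈ S ∧
      ((tail (arcs i) = vs i.castSucc ∧ head (arcs i) = vs i.succ) ∨
        (head (arcs i) = vs i.castSucc ∧ tail (arcs i) = vs i.succ))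

lemma hasUndirCycle_mono {V A : Type*} {tail head : A → V} {S S' : Set A}
    (hss : S ⊆ S') (h : HasUndirCycle tail head S) : HasUndirCycle tail head S' := by
  obtain ⟨k, arcs, vs, h1, h2, h3, h4, h5⟩ := h
  exact ⟨k, arcs, vs, h1, h2, h3, h4, fun i => ⟨hss (h5 i).1, (h5 i).2⟩⟩

open Classical in
/-- step lemma -/
lemma circ_step {V A : Type*} [Fintype A] [DecidableEq V] {tail head : A → V} {d : A → ℝ}
    (hdiv : ∀ v, ((∑ a : A, if tail a = v then d a else 0)
      - ∑ a : A, if head a = v then d a else 0) = 0)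
    {a : A} {v : V} (hda : d a ≠ 0) (hns : tail a ≠ head a)
    (hv : v = tail a ∨ v = head a) :
    ∃ a', a' ≠ a ∧ d a' ≠ 0 ∧ (v = tail a' ∨ v = head a') := by
  classical
  set c : A → ℝ := fun a' =>
    d a' * ((if tail a' = v then (1:ℝ) else 0) - (if head a' = v then 1 else 0)) with hc
  have hsum : ∑ a' : A, c a' = 0 := by
    have := hdiv v
    rw [← Finset.sum_sub_distrib] at this
    rw [← this]
    apply Finset.sum_congr rfl
    intro a' _
    simp only [hc]
    split_ifs <;> ring
  have hca : c a ≠ 0 := by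
    simp only [hc]
    rcases hv with h | h
    · rw [if_pos h.symm, if_neg (h ▸ (Ne.symm hns))]
      simpa using hda
    · rw [if_neg (h ▸ hns), if_pos h.symm]
      intro h'
      apply hda
      nlinarith [h']
  have hrest : ∑ a' ∈ Finset.univ.erase a, c a' ≠ 0 := by
    have := Finset.sum_erase_add Finset.univ c (Finset.mem_univ a)
    intro h0
    rw [h0, zero_add] at this
    rw [← this] at hsum
    exact hca hsum
  obtain ⟨a', ha'mem, ha'⟩ : ∃ a' ∈ Finset.univ.erase a, c a' ≠ 0 := by
    by_contra hno
    push_neg at hno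
    exact hrest (Finset.sum_eq_zero hno)
  refine ⟨a', Finset.ne_of_mem_erase ha'mem, ?_, ?_⟩
  · intro h0; apply ha'; simp [hc, h0]
  · by_contra hninc
    push_neg at hninc
    apply ha'
    simp only [hc, if_neg (fun e : tail a' = v => hninc.1 e.symm),
      if_neg (fun e : head a' = v => hninc.2 e.symm)]
    ring

lemma circulation_cycle {V A : Type*} [Fintype V] [Fintype A] [DecidableEq V]
    (tail head : A → V) (d : A → ℝ)
    (hdiv : ∀ v, ((∑ a : A, if tail a = v then d a else 0)
      - ∑ a : A, if head a = v then d a else 0) = 0)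
    (hd : ∃ a, d a ≠ 0) : HasUndirCycle tail head {a | d a ≠ 0} := by
  classical
  obtain ⟨a0, hda0⟩ := hd
  by_cases hloop : ∃ a, d a ≠ 0 ∧ tail a = head a
  · obtain ⟨a, hda, hta⟩ := hloop
    refine ⟨1, fun _ => a, fun _ => tail a, le_refl 1, ?_, ?_, rfl, ?_⟩
    · intro i j _; exact Subsingleton.elim i j
    · intro i j _; exact Subsingleton.elim i j
    · intro i; exact ⟨hda, Or.inl ⟨rfl, hta.symm⟩⟩
  push_neg at hloop
  -- invariant-carrying state
  let Inv : A × V → Prop := fun p => d p.1 ≠ 0 ∧ (p.2 = tail p.1 ∨ p.2 = head p.1)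
  have hstep : ∀ p : A × V, Inv p → ∃ a', a' ≠ p.1 ∧ d a' ≠ 0 ∧
      (p.2 = tail a' ∨ p.2 = head a') := by
    intro p hp
    exact circ_step hdiv hp.1 (hloop p.1 hp.1) hp.2
  -- the walk
  let next : {p : A × V // Inv p} → {p : A × V // Inv p} := fun p =>
    let a' := Classical.choose (hstep p.1 p.2)
    ⟨(a', if tail a' = p.1.2 then head a' else tail a'), by
      obtain ⟨hne, hda', hinc⟩ := Classical.choose_spec (hstep p.1 p.2)
      refine ⟨hda', ?_⟩
      by_cases hc : tail a' = p.1.2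
      · exact Or.inr (if_pos hc)
      · exact Or.inl (if_neg hc)⟩
  have hinv0 : Inv (a0, head a0) := ⟨hda0, Or.inr rfl⟩
  let f : ℕ → {p : A × V // Inv p} := fun n => next^[n] ⟨(a0, head a0), hinv0⟩
  let t : ℕ → A := fun n => (f n).1.1
  let w : ℕ → V := fun n => Nat.casesOn n (tail a0) (fun m => (f m).1.2)
  have hf_succ : ∀ n, f (n + 1) = next (f n) := fun n => Function.iterate_succ_apply' next n _
  have hP1 : ∀ n, d (t n) ≠ 0 := fun n => (f n).2.1
  have hP3 : ∀ n, t (n + 1) ≠ t n := by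
    intro n
    show (f (n+1)).1.1 ≠ (f n).1.1
    rw [hf_succ n]
    exact (Classical.choose_spec (hstep (f n).1 (f n).2)).1
  have hP2 : ∀ n, (tail (t n) = w n ∧ head (t n) = w (n + 1)) ∨
      (head (t n) = w n ∧ tail (t n) = w (n + 1)) := by
    intro n
    cases n with
    | zero => exact Or.inl ⟨rfl, rfl⟩
    | succ m =>
      -- w (m+1) = (f m).1.2, t (m+1) = fst of next (f m), w (m+2) = snd of next (f m)
      have h1 : w (m + 1) = (f m).1.2 := rfl
      have h2 : t (m + 1) = (next (f m)).1.1 := by show (f (m+1)).1.1 = _; rw [hf_succ]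
      have h3 : w (m + 2) = (next (f m)).1.2 := by show (f (m+1)).1.2 = _; rw [hf_succ]
      obtain ⟨hne, hda', hinc⟩ := Classical.choose_spec (hstep (f m).1 (f m).2)
      set a' := Classical.choose (hstep (f m).1 (f m).2) with ha'
      have h2' : t (m + 1) = a' := h2
      by_cases hc : tail a' = (f m).1.2
      · left
        constructor
        · rw [h2', h1, hc]
        · rw [h2', h3]
          show head a' = (if tail a' = (f m).1.2 then head a' else tail a')
          rw [if_pos hc]
      · right
        have hh : head a' = (f m).1.2 := by
          rcases hinc with h | h
          · exact absurd h.symm hc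
          · exact h.symm
        constructor
        · rw [h2', h1, hh]
        · rw [h2', h3]
          show tail a' = (if tail a' = (f m).1.2 then head a' else tail a')
          rw [if_neg hc]
  -- pigeonhole
  obtain ⟨i, j, hij, hwij⟩ := Fintype.exists_ne_map_eq_of_card_lt
    (fun i : Fin (Fintype.card V + 1) => w i) (by simp)
  -- wlog i < j
  have hex : ∃ j : ℕ, ∃ i, i < j ∧ w i = w j := by
    rcases lt_or_gt_of_ne (fun h : (i : ℕ) = j => hij (Fin.ext h)) with h | h
    · exact ⟨j, i, h, hwij⟩
    · exact ⟨i, j, h, hwij.symm⟩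
  haveI : DecidablePred (fun j => ∃ i, i < j ∧ w i = w j) := fun _ => Classical.dec _
  have hexQ : ∃ j : ℕ, (fun j => ∃ i, i < j ∧ w i = w j) j := hex
  set j0 := Nat.find hexQ with hj0
  obtain ⟨i0, hi0, hww⟩ := Nat.find_spec hexQ
  have hInj : ∀ p q, i0 ≤ p → p < j0 → i0 ≤ q → q < j0 → w p = w q → p = q := by
    intro p q _ hp _ hq hw
    by_contra hne
    rcases lt_or_gt_of_ne hne with h | h
    · exact Nat.find_min hexQ hq ⟨p, h, hw⟩
    · exact Nat.find_min hexQ hp ⟨q, h, hw.symm⟩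
  set k := j0 - i0 with hk
  have hk1 : 1 ≤ k := Nat.le_sub_of_add_le (by omega)
  have hik : i0 + k = j0 := by omega
  refine ⟨k, fun m => t (i0 + m), fun m => w (i0 + m), hk1, ?_, ?_, ?_, ?_⟩
  · -- arcs injective
    intro p q hpq
    simp only at hpq
    -- endpoints of t n are {w n, w (n+1)}
    have hend : ∀ n n', t n = t n' →
        (w n = w n' ∧ w (n+1) = w (n'+1)) ∨ (w n = w (n'+1) ∧ w (n+1) = w n') := by
      intro n n' he
      rcases hP2 n with ⟨e1, e2⟩ | ⟨e1, e2⟩ <;> rcases hP2 n' with ⟨e3, e4⟩ | ⟨e3, e4⟩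
      · exact Or.inl ⟨e1 ▸ e3 ▸ (by rw [he]), e2 ▸ e4 ▸ (by rw [he])⟩
      · exact Or.inr ⟨e1 ▸ e4 ▸ (by rw [he]), e2 ▸ e3 ▸ (by rw [he])⟩
      · exact Or.inr ⟨e1 ▸ e4 ▸ (by rw [he]), e2 ▸ e3 ▸ (by rw [he])⟩
      · exact Or.inl ⟨e1 ▸ e3 ▸ (by rw [he]), e2 ▸ e4 ▸ (by rw [he])⟩
    -- wlog p ≤ q
    have key : ∀ p q : Fin k, (p : ℕ) ≤ (q : ℕ) → t (i0 + p) = t (i0 + q) → p = q := by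
      intro p q hle he
      rcases Nat.eq_or_lt_of_le hle with heq | hlt
      · exact Fin.ext heq
      rcases Nat.eq_or_lt_of_le (Nat.succ_le_of_lt hlt) with heq | hlt2
      · -- q = p + 1 : consecutive, contradiction with hP3
        exfalso
        have : t (i0 + p + 1) ≠ t (i0 + p) := hP3 (i0 + p)
        apply this
        have : i0 + (q : ℕ) = i0 + p + 1 := by omega
        rw [← this]
        exact he.symm
      · -- q ≥ p + 2
        exfalso
        rcases hend _ _ he with ⟨e1, _⟩ | ⟨_, e2⟩
        · have := hInj (i0 + p) (i0 + q) (by omega) (by omega) (by omega) (by omega) e1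
          omega
        · have := hInj (i0 + p + 1) (i0 + q) (by omega) (by omega) (by omega) (by omega) e2
          omega
    rcases le_total (p : ℕ) (q : ℕ) with h | h
    · exact key p q h hpq
    · exact (key q p h hpq.symm).symm
  · -- vertex injectivity
    intro p q hpq
    simp only [Fin.coe_castSucc] at hpq
    exact Fin.ext (by
      have := hInj (i0 + p) (i0 + q) (by omega) (by have := p.2; omega)
        (by omega) (by have := q.2; omega) hpq
      omega)
  · -- closing
    show w (i0 + (Fin.last k : Fin (k+1)).val) = w (i0 + ((0 : Fin (k+1)) : ℕ))
    simp only [Fin.val_last, Fin.val_zero, Nat.add_zero, hik]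
    exact hww.symm
  · intro i
    refine ⟨hP1 _, ?_⟩
    have h2 : ((i.succ : Fin (k+1)) : ℕ) = (i : ℕ) + 1 := rfl
    have h1 : ((i.castSucc : Fin (k+1)) : ℕ) = (i : ℕ) := rfl
    simp only [h1, h2]
    have := hP2 (i0 + i)
    rw [show i0 + ((i : ℕ) + 1) = (i0 + i) + 1 by omega]
    exact this


theorem aux_backward {V A : Type*} [Fintype V] [Fintype A] [DecidableEq V]
    (tail head : A → V) (b : V → ℝ)
    (U : A → Option ℝ)
    (x : A → ℝ) (hx : x ∈ flowPoly tail head b U)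
    (hnc : ¬ HasUndirCycle tail head {a | IsFreeArc U x a}) :
    x ∈ (flowPoly tail head b U).extremePoints ℝ := by
  classical
  simp only [flowPoly, Set.mem_setOf_eq] at hx
  rw [mem_extremePoints]
  refine ⟨hx, ?_⟩
  intro x₁ h1 x₂ h2 hseg
  simp only [flowPoly, Set.mem_setOf_eq] at h1 h2
  obtain ⟨tq, u, ht, hu, htu, hsum⟩ := hseg
  have hsa : ∀ a, tq * x₁ a + u * x₂ a = x a := by
    intro a
    have := congrFun hsum a
    simpa [Pi.add_apply, Pi.smul_apply, smul_eq_mul] using this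
  have hfix : ∀ a, ¬ IsFreeArc U x a → x₁ a = x a ∧ x₂ a = x a := by
    intro a hna
    have hxa := hx.2 a
    have h1a := h1.2 a
    have h2a := h2.2 a
    have hs := hsa a
    unfold IsFreeArc at hna
    push_neg at hna
    by_cases h0 : x a = 0
    · rw [h0] at hs ⊢
      constructor
      · refine le_antisymm ?_ h1a.1
        nlinarith [h2a.1]
      · refine le_antisymm ?_ h2a.1
        nlinarith [h1a.1]
    · have hpos : 0 < x a := lt_of_le_of_ne hxa.1 (Ne.symm h0)
      obtain ⟨c, hcU, hcle⟩ := hna hpos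
      have hxac : x a = c := le_antisymm (hxa.2 c hcU) hcle
      rw [hxac] at hs ⊢
      constructor
      · refine le_antisymm (h1a.2 c hcU) ?_
        nlinarith [h2a.2 c hcU]
      · refine le_antisymm (h2a.2 c hcU) ?_
        nlinarith [h1a.2 c hcU]
  have h12 : x₁ = x₂ := by
    by_contra hne
    obtain ⟨a, ha⟩ := Function.ne_iff.mp hne
    apply hnc
    apply hasUndirCycle_mono ?_ (circulation_cycle tail head (fun a => x₁ a - x₂ a) ?_ ⟨a, sub_ne_zero_of_ne ha⟩)
    · intro a' ha'
      simp only [Set.mem_setOf_eq] at ha' ⊢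
      by_contra hfree
      obtain ⟨e1, e2⟩ := hfix a' hfree
      exact ha' (by rw [e1, e2, sub_self])
    · intro v
      have e1 : ∀ (g : A → V) (y1 y2 : A → ℝ), ∑ a' : A, (if g a' = v then y1 a' - y2 a' else 0)
          = (∑ a' : A, if g a' = v then y1 a' else 0)
            - ∑ a' : A, if g a' = v then y2 a' else 0 := by
        intro g y1 y2
        rw [← Finset.sum_sub_distrib]
        apply Finset.sum_congr rfl
        intro a' _
        split_ifs <;> ring
      rw [e1, e1]
      have c1 := h1.1 v
      have c2 := h2.1 v
      linarith
  subst h12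
  have hx1 : x₁ = x := by
    funext a
    have h := hsa a
    have h2 : (tq + u) * x₁ a = tq * x₁ a + u * x₁ a := by ring
    rw [htu, one_mul] at h2
    linarith
  exact ⟨hx1, hx1⟩

theorem aux_forward {V A : Type*} [Fintype V] [Fintype A] [DecidableEq V]
    (tail head : A → V) (b : V → ℝ)
    (U : A → Option ℝ)
    (x : A → ℝ) (hx : x ∈ flowPoly tail head b U)
    (hext : x ∈ (flowPoly tail head b U).extremePoints ℝ) :
    ¬ HasUndirCycle tail head {a | IsFreeArc U x a} := by
  classical
  simp only [flowPoly, Set.mem_setOf_eq] at hx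
  intro hcyc
  obtain ⟨k, arcs, vs, hk1, hainj, hvinj, hclose, hprop⟩ := hcyc
  simp only [Set.mem_setOf_eq] at hprop
  set s : Fin k → ℝ := fun i =>
    if tail (arcs i) = vs i.castSucc ∧ head (arcs i) = vs i.succ then 1 else -1 with hs
  set χ : A → ℝ := fun a => ∑ i : Fin k, if arcs i = a then s i else 0 with hχ
  have hχarcs : ∀ i, χ (arcs i) = s i := by
    intro i
    rw [hχ]
    simp only
    rw [Finset.sum_eq_single_of_mem i (Finset.mem_univ i)]
    · rw [if_pos rfl]
    · intro j _ hji
      exact if_neg (fun e => hji (hainj e))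
  have hχcases : ∀ a, χ a = 0 ∨ ((χ a = 1 ∨ χ a = -1) ∧ IsFreeArc U x a) := by
    intro a
    by_cases h : ∃ i, arcs i = a
    · obtain ⟨i, rfl⟩ := h
      right
      refine ⟨?_, (hprop i).1⟩
      rw [hχarcs i, hs]
      simp only
      split_ifs
      · exact Or.inl rfl
      · exact Or.inr rfl
    · left
      push_neg at h
      rw [hχ]
      simp only
      apply Finset.sum_eq_zero
      intro i _
      exact if_neg (h i)
  -- divergence of χ is zero
  have hdivχ : ∀ v, ((∑ a : A, if tail a = v then χ a else 0)
      - ∑ a : A, if head a = v then χ a else 0) = 0 := by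
    intro v
    have hswap : ∀ g : A → V, ∑ a : A, (if g a = v then χ a else 0)
        = ∑ i : Fin k, (if g (arcs i) = v then s i else 0) := by
      intro g
      calc ∑ a : A, (if g a = v then χ a else 0)
          = ∑ a : A, ∑ i : Fin k, (if arcs i = a then (if g a = v then s i else 0) else 0) := by
            apply Finset.sum_congr rfl
            intro a _
            by_cases hg : g a = v
            · simp only [if_pos hg, hχ]
            · simp only [if_neg hg, ite_self, Finset.sum_const_zero]
        _ = ∑ i : Fin k, ∑ a : A, (if arcs i = a then (if g a = v then s i else 0) else 0) :=
            Finset.sum_comm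
        _ = ∑ i : Fin k, (if g (arcs i) = v then s i else 0) := by
            apply Finset.sum_congr rfl
            intro i _
            simp
    rw [hswap tail, hswap head, ← Finset.sum_sub_distrib]
    -- telescoping
    set F : ℕ → ℝ := fun n => if h : n < k + 1 then (if vs ⟨n, h⟩ = v then 1 else 0) else 0 with hF
    have hterm : ∀ i : Fin k, ((if tail (arcs i) = v then s i else 0)
        - if head (arcs i) = v then s i else 0) = F i.val - F (i.val + 1) := by
      intro i
      have hc : F i.val = (if vs i.castSucc = v then 1 else 0) := by
        rw [hF]
        simp only
        rw [dif_pos (by omega : i.val < k + 1)]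
        congr 1
      have hsucc : F (i.val + 1) = (if vs i.succ = v then 1 else 0) := by
        rw [hF]
        simp only
        rw [dif_pos (by omega : i.val + 1 < k + 1)]
        congr 1
      rw [hc, hsucc]
      rcases (hprop i).2 with ⟨e1, e2⟩ | ⟨e1, e2⟩
      · have hsi : s i = 1 := by simp only [hs]; exact if_pos ⟨e1, e2⟩
        simp only [hsi, e1, e2]
      · by_cases hb2 : tail (arcs i) = vs i.castSucc ∧ head (arcs i) = vs i.succ
        · have hsi : s i = 1 := by simp only [hs]; exact if_pos hb2
          have hvv : vs i.castSucc = vs i.succ := by rw [← hb2.1, e2]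
          rw [hsi, hb2.1, e1, hvv]
        · have hsi : s i = -1 := by simp only [hs]; exact if_neg hb2
          rw [hsi, e1, e2]
          split_ifs <;> ring
    calc ∑ i : Fin k, ((if tail (arcs i) = v then s i else 0)
        - if head (arcs i) = v then s i else 0)
        = ∑ i : Fin k, (F i.val - F (i.val + 1)) := Finset.sum_congr rfl (fun i _ => hterm i)
      _ = ∑ i ∈ Finset.range k, (F i - F (i + 1)) :=
          Fin.sum_univ_eq_sum_range (fun n => F n - F (n + 1)) k
      _ = F 0 - F k := Finset.sum_range_sub' F k
      _ = 0 := by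
          rw [hF]
          simp only
          rw [dif_pos (by omega : 0 < k + 1), dif_pos (by omega : k < k + 1)]
          have : (⟨k, by omega⟩ : Fin (k + 1)) = Fin.last k := rfl
          rw [this, hclose]
          have : (⟨0, by omega⟩ : Fin (k + 1)) = 0 := rfl
          rw [this]
          ring
  -- epsilon
  haveI : Nonempty A := ⟨arcs ⟨0, hk1⟩⟩
  set gap : A → ℝ := fun a => (U a).elim 1 (fun c => c - x a) with hgap
  set T : A → ℝ := fun a => if χ a = 0 then 1 else min (x a) (gap a) with hT
  set ε : ℝ := Finset.univ.inf' Finset.univ_nonempty T with hε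
  have hεpos : 0 < ε := by
    rw [hε, Finset.lt_inf'_iff]
    intro a _
    rw [hT]
    simp only
    split_ifs with hc
    · norm_num
    · rcases hχcases a with h | ⟨_, hfree⟩
      · exact absurd h hc
      · apply lt_min hfree.1
        show 0 < (U a).elim 1 (fun c => c - x a)
        cases hUa : U a with
        | none => exact one_pos
        | some c =>
          have : x a < c := hfree.2 c (Option.mem_def.mpr hUa)
          show (0:ℝ) < c - x a
          linarith
  have hεle : ∀ a, ε ≤ T a := fun a => Finset.inf'_le T (Finset.mem_univ a)
  -- the perturbations
  set y : A → ℝ := fun a => x a + ε * χ a with hy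
  set z : A → ℝ := fun a => x a - ε * χ a with hz
  have hbounds : ∀ a, (0 ≤ y a ∧ ∀ c ∈ U a, y a ≤ c) ∧ (0 ≤ z a ∧ ∀ c ∈ U a, z a ≤ c) := by
    intro a
    rcases hχcases a with h | ⟨h1, hfree⟩
    · rw [hy, hz]
      simp only [h, mul_zero, add_zero, sub_zero]
      exact ⟨hx.2 a, hx.2 a⟩
    · have hχne : χ a ≠ 0 := by rcases h1 with h | h <;> rw [h] <;> norm_num
      have hTle1 : T a ≤ x a := by rw [hT]; simp only [if_neg hχne]; exact min_le_left _ _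
      have hTle2 : ∀ c ∈ U a, T a ≤ c - x a := by
        intro c hc
        rw [hT]
        simp only [if_neg hχne]
        refine le_trans (min_le_right _ _) ?_
        show (U a).elim 1 (fun c => c - x a) ≤ c - x a
        rw [Option.mem_def.mp hc]
        exact le_of_eq rfl
      have hea := hεle a
      rw [hy, hz]
      simp only
      refine ⟨⟨?_, ?_⟩, ?_, ?_⟩
      · rcases h1 with h | h <;> rw [h] <;> nlinarith
      · intro c hc
        have := hTle2 c hc
        rcases h1 with h | h <;> rw [h] <;> nlinarith
      · rcases h1 with h | h <;> rw [h] <;> nlinarith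
      · intro c hc
        have := hTle2 c hc
        rcases h1 with h | h <;> rw [h] <;> nlinarith
  have hsplit : ∀ (g : A → V) (v : V) (e : ℝ),
      ∑ a : A, (if g a = v then x a + e * χ a else 0)
        = (∑ a : A, if g a = v then x a else 0) + e * ∑ a : A, (if g a = v then χ a else 0) := by
    intro g v e
    rw [Finset.mul_sum, ← Finset.sum_add_distrib]
    apply Finset.sum_congr rfl
    intro a _
    split_ifs <;> ring
  have hconsy : conserves tail head b y := by
    intro v
    have hty := hsplit tail v ε
    have hhy := hsplit head v ε
    have hc := hx.1 v
    have hd := hdivχ v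
    rw [hy]
    simp only
    rw [hty, hhy]
    nlinarith [hc, hd]
  have hconsz : conserves tail head b z := by
    intro v
    have hty := hsplit tail v (-ε)
    have hhy := hsplit head v (-ε)
    have hc := hx.1 v
    have hd := hdivχ v
    have ez : ∀ a, z a = x a + (-ε) * χ a := by intro a; rw [hz]; ring
    have e1 : ∑ a : A, (if tail a = v then z a else 0)
        = ∑ a : A, (if tail a = v then x a + (-ε) * χ a else 0) := by
      apply Finset.sum_congr rfl; intro a _; rw [ez a]
    have e2 : ∑ a : A, (if head a = v then z a else 0)
        = ∑ a : A, (if head a = v then x a + (-ε) * χ a else 0) := by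
      apply Finset.sum_congr rfl; intro a _; rw [ez a]
    rw [e1, e2, hty, hhy]
    nlinarith [hc, hd]
  have hymem : y ∈ flowPoly tail head b U := ⟨hconsy, fun a => (hbounds a).1⟩
  have hzmem : z ∈ flowPoly tail head b U := ⟨hconsz, fun a => (hbounds a).2⟩
  have hseg : x ∈ openSegment ℝ y z := by
    refine ⟨1/2, 1/2, by norm_num, by norm_num, by norm_num, ?_⟩
    funext a
    simp only [Pi.add_apply, Pi.smul_apply, smul_eq_mul, hy, hz]
    ring
  have heq := (mem_extremePoints.mp hext).2 y hymem z hzmem hseg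
  have ha0 : χ (arcs ⟨0, hk1⟩) = s ⟨0, hk1⟩ := hχarcs _
  have hs0 : s ⟨0, hk1⟩ = 1 ∨ s ⟨0, hk1⟩ = -1 := by
    simp only [hs]; split_ifs
    · exact Or.inl rfl
    · exact Or.inr rfl
  have := congrFun heq.1 (arcs ⟨0, hk1⟩)
  rw [hy] at this
  simp only at this
  rcases hs0 with h | h <;> rw [ha0, h] at this <;> nlinarith [hεpos, this]

/-- A feasible flow is an extreme point of the flow polyhedron iff it is a cycle free
solution, i.e. its free arcs contain no undirected cycle. -/
theorem extremePoint_iff_cycleFree {V A : Type*} [Fintype V] [Fintype A] [DecidableEq V]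
    (tail head : A → V) (b : V → ℝ) (hb : ∑ v : V, b v = 0)
    (U : A → Option ℝ) (hU : ∀ a, ∀ c ∈ U a, 0 ≤ c)
    (x : A → ℝ) (hx : x ∈ flowPoly tail head b U) :
    x ∈ (flowPoly tail head b U).extremePoints ℝ ↔
      ¬ HasUndirCycle tail head {a | IsFreeArc U x a} := by
  constructor
  · intro hext
    exact aux_forward tail head b U x hx hext
  · intro hnc
    exact aux_backward tail head b U x hx hnc
end

section
/- Let f be a feasible flow in a directed graph with a spanning tree T, and let a = (u, v) be an arc of T. Removing a from T yields two components T_1 (containing u) and T_2 (containing v). Then f_a = Σ_{w ∈ T_1} b_w + Σ_{e ∈ A_2} f_e − Σ_{e ∈ A_1} f_e, where A_1 is the set of non-tree arcs with tail in T_1 and head in T_2, and A_2 is the set of non-tree arcs with tail in T_2 and head in T_1. -/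
open scoped BigOperators

/-- One undirected step along an arc of `S`. -/
def undirStep {V A : Type*} (tail head : A → V) (S : Set A) (v w : V) : Prop :=
  ∃ a ∈ S, (tail a = v ∧ head a = w) ∨ (tail a = w ∧ head a = v)

/-- `T` is a spanning tree of the underlying undirected graph. -/
def IsSpanningTree {V A : Type*} (tail head : A → V) (T : Set A) : Prop :=
  (∀ v w : V, Relation.ReflTransGen (undirStep tail head T) v w) ∧
    ¬ HasUndirCycle tail head T

lemma getVert_eq_support_get {V : Type*} {G : SimpleGraph V} {u v : V} (p : G.Walk u v)
    (n : ℕ) (hn : n ≤ p.length) :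
    p.getVert n = p.support.get ⟨n, by rw [SimpleGraph.Walk.length_support]; omega⟩ := by
  induction p generalizing n with
  | nil => simp only [SimpleGraph.Walk.length_nil, Nat.le_zero] at hn; subst hn; simp [SimpleGraph.Walk.getVert]
  | cons h q ih =>
    cases n with
    | zero => simp
    | succ m =>
      simp only [SimpleGraph.Walk.getVert_cons_succ, SimpleGraph.Walk.support_cons,
        List.get_cons_succ]
      exact ih m (by simpa using hn)

lemma IsPath.getVert_injOn' {V : Type*} {G : SimpleGraph V} {u v : V} {p : G.Walk u v}
    (hp : p.IsPath) {i j : ℕ} (hi : i ≤ p.length) (hj : j ≤ p.length)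
    (h : p.getVert i = p.getVert j) : i = j := by
  rw [getVert_eq_support_get p i hi, getVert_eq_support_get p j hj] at h
  have := (List.nodup_iff_injective_get.mp hp.support_nodup) h
  exact congrArg Fin.val this

lemma no_back_path {V A : Type*} [DecidableEq V] (tail head : A → V) (T : Set A)
    (hT : IsSpanningTree tail head T) (a₀ : A) (ha₀ : a₀ ∈ T) :
    ¬ Relation.ReflTransGen (undirStep tail head (T \ {a₀})) (tail a₀) (head a₀) := by
  intro hreach
  apply hT.2
  by_cases hne : tail a₀ = head a₀
  · refine ⟨1, fun _ => a₀, fun _ => tail a₀, le_refl 1,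
      Function.injective_of_subsingleton _, Function.injective_of_subsingleton _, rfl,
      fun i => ⟨ha₀, Or.inl ⟨rfl, hne.symm⟩⟩⟩
  · set S : Set A := T \ {a₀} with hS
    let G : SimpleGraph V :=
      { Adj := fun v w => v ≠ w ∧ undirStep tail head S v w
        symm := by
          constructor
          rintro v w ⟨hvw, a, ha, h⟩
          exact ⟨hvw.symm, a, ha, h.symm⟩
        loopless := ⟨fun v h => h.1 rfl⟩ }
    have hgen : ∀ w : V, Relation.ReflTransGen (undirStep tail head S) (tail a₀) w →
        G.Reachable (tail a₀) w := by
      intro w hw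
      induction hw with
      | refl => exact SimpleGraph.Reachable.refl _
      | tail _ hstep ih =>
        rename_i x y _
        by_cases hxy : x = y
        · exact hxy ▸ ih
        · exact ih.trans (SimpleGraph.Adj.reachable ⟨hxy, hstep⟩)
    have hreach' : G.Reachable (tail a₀) (head a₀) := hgen _ hreach
    obtain ⟨p0⟩ := hreach'
    set q : G.Walk (tail a₀) (head a₀) := (p0.toPath : G.Path _ _).1 with hq
    have hqpath : q.IsPath := p0.toPath.2
    set n : ℕ := q.length with hn
    have hn1 : 1 ≤ n := by
      rcases Nat.eq_zero_or_pos n with h0 | h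
      · exfalso; apply hne
        have := q.getVert_length
        rw [← hn, h0, q.getVert_zero] at this
        exact this
      · exact h
    have hinj : ∀ i j : ℕ, i ≤ n → j ≤ n → q.getVert i = q.getVert j → i = j :=
      fun i j hi hj h => IsPath.getVert_injOn' hqpath hi hj h
    have hadj : ∀ i : Fin n, ∃ a ∈ S,
        (tail a = q.getVert i.val ∧ head a = q.getVert (i.val + 1)) ∨
        (tail a = q.getVert (i.val + 1) ∧ head a = q.getVert i.val) := by
      intro i
      exact (q.adj_getVert_succ i.isLt).2
    choose arcsFn hmem hor using hadj
    have harcsInj : Function.Injective arcsFn := by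
      intro i j hij
      rcases hor i with ⟨hti, hhi⟩ | ⟨hti, hhi⟩ <;> rcases hor j with ⟨htj, hhj⟩ | ⟨htj, hhj⟩
      · exact Fin.ext (hinj i.val j.val i.isLt.le j.isLt.le (by rw [← hti, hij, htj]))
      · have h1 : i.val = j.val + 1 :=
          hinj i.val (j.val + 1) i.isLt.le j.isLt (by rw [← hti, hij, htj])
        have h2 : i.val + 1 = j.val :=
          hinj (i.val + 1) j.val i.isLt j.isLt.le (by rw [← hhi, hij, hhj])
        exact Fin.ext (by omega)
      · have h1 : i.val + 1 = j.val :=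
          hinj (i.val + 1) j.val i.isLt j.isLt.le (by rw [← hti, hij, htj])
        have h2 : i.val = j.val + 1 :=
          hinj i.val (j.val + 1) i.isLt.le j.isLt (by rw [← hhi, hij, hhj])
        exact Fin.ext (by omega)
      · exact Fin.ext (hinj i.val j.val i.isLt.le j.isLt.le (by rw [← hhi, hij, hhj]))
    refine ⟨n + 1,
      (fun i : Fin (n + 1) => if h : i.val < n then arcsFn ⟨i.val, h⟩ else a₀),
      (fun i : Fin (n + 2) => if i.val ≤ n then q.getVert i.val else q.getVert 0),
      by omega, ?_, ?_, ?_, ?_⟩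
    · intro i j h
      dsimp only at h
      by_cases hi : i.val < n <;> by_cases hj : j.val < n
      · rw [dif_pos hi, dif_pos hj] at h
        have hval : (i : ℕ) = j := by
          have := harcsInj h
          simpa [Fin.mk.injEq] using this
        exact Fin.ext hval
      · rw [dif_pos hi, dif_neg hj] at h
        exact absurd (Set.mem_singleton_iff.mpr h) (hmem ⟨i.val, hi⟩).2
      · rw [dif_neg hi, dif_pos hj] at h
        exact absurd (Set.mem_singleton_iff.mpr h.symm) (hmem ⟨j.val, hj⟩).2
      · exact Fin.ext (by omega)
    · intro i j h
      dsimp only at h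
      simp only [Fin.coe_castSucc] at h
      rw [if_pos (Nat.lt_succ_iff.mp i.isLt), if_pos (Nat.lt_succ_iff.mp j.isLt)] at h
      exact Fin.ext (hinj i.val j.val (Nat.lt_succ_iff.mp i.isLt) (Nat.lt_succ_iff.mp j.isLt) h)
    · dsimp only
      rw [Fin.val_last, if_neg (by omega)]
      simp
    · intro i
      dsimp only
      by_cases h : i.val < n
      · constructor
        · rw [dif_pos h]; exact (hmem ⟨i.val, h⟩).1
        · rw [dif_pos h]
          simp only [Fin.coe_castSucc, Fin.val_succ]
          rw [if_pos (by omega), if_pos (by omega)]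
          rcases hor ⟨i.val, h⟩ with ⟨h1, h2⟩ | ⟨h1, h2⟩
          · exact Or.inl ⟨h1, h2⟩
          · exact Or.inr ⟨h2, h1⟩
      · have hin : i.val = n := by omega
        constructor
        · rw [dif_neg h]; exact ha₀
        · rw [dif_neg h]
          simp only [Fin.coe_castSucc, Fin.val_succ]
          rw [if_pos (by omega), if_neg (by omega), hin]
          exact Or.inr ⟨q.getVert_length.symm, q.getVert_zero.symm⟩

/-- Flow decomposition along a tree arc: if removing the tree arc `a₀` splits the spanning
tree into the component `T₁` of its tail (and the complementary component), then
`f a₀ = Σ_{w ∈ T₁} b w + Σ_{e ∈ A₂} f e − Σ_{e ∈ A₁} f e`, where `A₁` (resp. `A₂`) is the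
set of non-tree arcs from `T₁` to its complement (resp. from the complement to `T₁`). -/
theorem tree_arc_flow_formula {V A : Type*} [Fintype V] [Fintype A] [DecidableEq V]
    (tail head : A → V) (b : V → ℝ) (hb : ∑ v : V, b v = 0)
    (f : A → ℝ) (hf : conserves tail head b f)
    (T : Set A) (hT : IsSpanningTree tail head T) (a₀ : A) (ha₀ : a₀ ∈ T) :
    f a₀ =
      (∑ w : V,
          ({w | Relation.ReflTransGen (undirStep tail head (T \ {a₀})) (tail a₀) w} :
            Set V).indicator b w) +
        (∑ e : A,
          ({e | e ∉ T ∧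
              tail e ∉ {w | Relation.ReflTransGen (undirStep tail head (T \ {a₀})) (tail a₀) w} ∧
              head e ∈ {w | Relation.ReflTransGen (undirStep tail head (T \ {a₀})) (tail a₀) w}} :
            Set A).indicator f e) -
        ∑ e : A,
          ({e | e ∉ T ∧
              tail e ∈ {w | Relation.ReflTransGen (undirStep tail head (T \ {a₀})) (tail a₀) w} ∧
              head e ∉ {w | Relation.ReflTransGen (undirStep tail head (T \ {a₀})) (tail a₀) w}} :
            Set A).indicator f e := by
  classical
  set C : Set V :=
    {w | Relation.ReflTransGen (undirStep tail head (T \ {a₀})) (tail a₀) w} with hCdef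
  have htc : tail a₀ ∈ C := Relation.ReflTransGen.refl
  have hhc : head a₀ ∉ C := no_back_path tail head T hT a₀ ha₀
  have hedge : ∀ a ∈ T \ {a₀}, (tail a ∈ C ↔ head a ∈ C) := by
    intro a ha
    constructor
    · intro h; exact Relation.ReflTransGen.tail h ⟨a, ha, Or.inl ⟨rfl, rfl⟩⟩
    · intro h; exact Relation.ReflTransGen.tail h ⟨a, ha, Or.inr ⟨rfl, rfl⟩⟩
  have single : ∀ (g : V) (c : ℝ),
      (∑ w : V, if w ∈ C then (if g = w then c else 0) else 0) = if g ∈ C then c else 0 := by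
    intro g c
    rw [Finset.sum_congr rfl (fun w _ => show (if w ∈ C then (if g = w then c else 0) else 0)
        = if g = w then (if g ∈ C then c else 0) else 0 by
      by_cases h1 : g = w
      · subst h1; simp
      · simp [h1])]
    rw [Finset.sum_ite_eq Finset.univ g fun _ => if g ∈ C then c else 0]
    simp
  have hsum : (∑ w : V, C.indicator b w)
      = ∑ a : A, ((if tail a ∈ C then f a else 0) - (if head a ∈ C then f a else 0)) := by
    have : (∑ w : V, C.indicator b w)
        = ∑ w : V, ∑ a : A, ((if w ∈ C then (if tail a = w then f a else 0) else 0)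
            - (if w ∈ C then (if head a = w then f a else 0) else 0)) := by
      refine Finset.sum_congr rfl fun w _ => ?_
      rw [Set.indicator_apply]
      by_cases h : w ∈ C
      · rw [if_pos h, ← hf w, Finset.sum_sub_distrib]
        congr 1 <;> exact Finset.sum_congr rfl fun a _ => by rw [if_pos h]
      · rw [if_neg h]
        simp [h]
    rw [this, Finset.sum_comm]
    refine Finset.sum_congr rfl fun a _ => ?_
    rw [Finset.sum_sub_distrib, single (tail a) (f a), single (head a) (f a)]
  have harc : ∀ a : A, ((if tail a ∈ C then f a else 0) - (if head a ∈ C then f a else 0))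
      = (if a = a₀ then f a else 0)
        + ({e : A | e ∉ T ∧ tail e ∈ C ∧ head e ∉ C}).indicator f a
        - ({e : A | e ∉ T ∧ tail e ∉ C ∧ head e ∈ C}).indicator f a := by
    intro a
    rw [Set.indicator_apply, Set.indicator_apply]
    by_cases haT : a ∈ T
    · have h1 : a ∉ {e : A | e ∉ T ∧ tail e ∈ C ∧ head e ∉ C} := fun h => h.1 haT
      have h2 : a ∉ {e : A | e ∉ T ∧ tail e ∉ C ∧ head e ∈ C} := fun h => h.1 haT
      rw [if_neg h1, if_neg h2]
      by_cases ha0 : a = a₀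
      · subst ha0
        rw [if_pos htc, if_neg hhc, if_pos rfl]; ring
      · have hiff := hedge a ⟨haT, ha0⟩
        rw [if_neg ha0]
        by_cases h : tail a ∈ C
        · rw [if_pos h, if_pos (hiff.mp h)]; ring
        · rw [if_neg h, if_neg (fun hh => h (hiff.mpr hh))]; ring
    · have ha0 : a ≠ a₀ := fun h => haT (h ▸ ha₀)
      rw [if_neg ha0]
      by_cases h1 : tail a ∈ C <;> by_cases h2 : head a ∈ C <;>
        simp [Set.mem_setOf_eq, h1, h2, haT]
  have hfinal : (∑ w : V, C.indicator b w)
      = f a₀ + (∑ e : A, ({e : A | e ∉ T ∧ tail e ∈ C ∧ head e ∉ C}).indicator f e)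
        - ∑ e : A, ({e : A | e ∉ T ∧ tail e ∉ C ∧ head e ∈ C}).indicator f e := by
    rw [hsum, Finset.sum_congr rfl fun a _ => harc a, Finset.sum_sub_distrib,
      Finset.sum_add_distrib, Finset.sum_ite_eq' Finset.univ a₀ f]
    simp
  linarith [hfinal]
end

section
/- Consider the grid flow instance with L = 3 rows and a knapsack instance (values y_i, costs c_i, i = 1..n, thresholds Y, C with B ≥ max_i y_i): source v_{1,1} has supply Σ_{i=1}^n (B − y_i) + Y; sinks v_{2,i} have demand B − y_i and v_{3,n} has demand Y; each downward arc (v_{1,i}, v_{2,i}) has capacity B; each arc (v_{2,i}, v_{3,i}) has fixed-charge cost c_i for nonzero flow and 0 otherwise; all other usable arcs have zero cost and infinite capacity. Then the knapsack instance has a feasible subset S (Σ_{i∈S} c_i ≤ C and Σ_{i∈S} y_i ≥ Y) if and only if the flow instance admits a feasible flow of total cost at most C. -/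
/-- Feasibility for the 3-row, `n`-column grid instance built from a knapsack instance.
0-indexed columns `t ∈ {0,…,n−1}`.  The vertex `v_{1,0}` has supply `Σᵢ (B − yᵢ) + Y`;
each `v_{2,t}` has demand `B − y t`; `v_{3,n−1}` has demand `Y`.  `h1 t`, `h3 t` are the
flows on the forward arcs `(v_{1,t},v_{1,t+1})` and `(v_{3,t},v_{3,t+1})`; `d12 t`, `d23 t`
are the flows on the downward arcs `(v_{1,t},v_{2,t})` and `(v_{2,t},v_{3,t})`.  Each
downward arc `(v_{1,t},v_{2,t})` has capacity `B`; all other usable arcs are uncapacitated;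
row-2 forward arcs are unusable (omitted). -/
def KnapFlowFeasible (n : ℕ) (y : ℕ → ℕ) (Y B : ℕ) (h1 h3 d12 d23 : ℕ → ℝ) : Prop :=
  (∀ t, 0 ≤ h1 t ∧ 0 ≤ h3 t ∧ 0 ≤ d12 t ∧ 0 ≤ d23 t) ∧
    (∀ t < n, d12 t ≤ B) ∧
    (∀ t < n, (if t = 0 then (∑ i ∈ Finset.range n, ((B : ℝ) - y i)) + Y else h1 (t - 1)) =
      (if t + 1 < n then h1 t else 0) + d12 t) ∧
    (∀ t < n, d12 t = ((B : ℝ) - y t) + d23 t) ∧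
    (∀ t < n, (if t = 0 then 0 else h3 (t - 1)) + d23 t =
      (if t + 1 < n then h3 t else 0) + (if t = n - 1 then (Y : ℝ) else 0))

/-- The fixed-charge cost of a flow: arc `(v_{2,t},v_{3,t})` costs `c t` when it carries
positive flow, and `0` otherwise; all other usable arcs are free. -/
noncomputable def KnapFlowCost (n : ℕ) (c : ℕ → ℕ) (d23 : ℕ → ℝ) : ℝ :=
  ∑ t ∈ Finset.range n, if 0 < d23 t then (c t : ℝ) else 0


/-- Telescoping of row-3 conservation: the cumulative `d23`-flow equals `h3 k` before
the last column and `Y` at the last column. -/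
lemma row3_telescope (n Y : ℕ) (h3 d23 : ℕ → ℝ)
    (hc : ∀ t < n, (if t = 0 then 0 else h3 (t - 1)) + d23 t =
      (if t + 1 < n then h3 t else 0) + (if t = n - 1 then (Y : ℝ) else 0)) :
    ∀ k < n, ∑ t ∈ Finset.range (k + 1), d23 t = if k + 1 < n then h3 k else (Y : ℝ) := by
  intro k
  induction k with
  | zero =>
    intro hk
    have h0 := hc 0 hk
    rw [if_pos rfl, zero_add] at h0
    rw [Finset.sum_range_one]
    by_cases hgt : 0 + 1 < n
    · rw [if_pos hgt] at h0 ⊢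
      rw [if_neg (show ¬(0 = n - 1) by omega), add_zero] at h0
      exact h0
    · rw [if_neg hgt] at h0 ⊢
      rw [if_pos (show 0 = n - 1 by omega), zero_add] at h0
      exact h0
  | succ k ih =>
    intro hk
    have hk' : k < n := by omega
    have hih := ih hk'
    rw [if_pos hk] at hih
    have hc' := hc (k + 1) hk
    have hne : ¬ (k + 1 = 0) := by omega
    rw [if_neg hne] at hc'
    simp only [Nat.add_sub_cancel] at hc'
    rw [Finset.sum_range_succ, hih]
    rcases lt_or_ge (k + 2) n with h2 | h2
    · have : ¬ (k + 1 = n - 1) := by omega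
      rw [if_pos h2] at hc' ⊢
      rw [if_neg this, add_zero] at hc'
      exact hc'
    · have hlast : k + 1 = n - 1 := by omega
      have h2' : ¬ (k + 1 + 1 < n) := by omega
      rw [if_neg h2'] at hc' ⊢
      rw [if_pos hlast, zero_add] at hc'
      exact hc'

/-- The knapsack instance has a feasible subset `S` (`Σ_{i∈S} cᵢ ≤ C` and `Σ_{i∈S} yᵢ ≥ Y`)
iff the constructed grid flow instance admits a feasible flow of total cost at most `C`. -/
theorem knapsack_iff_capacitated_grid_flow (n : ℕ) (hn : 0 < n) (y c : ℕ → ℕ)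
    (Y C B : ℕ) (hB : ∀ i < n, y i ≤ B) (hY : Y ≤ ∑ i ∈ Finset.range n, y i) :
    (∃ S : Finset ℕ, S ⊆ Finset.range n ∧ (∑ i ∈ S, c i) ≤ C ∧ Y ≤ ∑ i ∈ S, y i) ↔
      ∃ h1 h3 d12 d23 : ℕ → ℝ, KnapFlowFeasible n y Y B h1 h3 d12 d23 ∧
        KnapFlowCost n c d23 ≤ C := by
  constructor
  · rintro ⟨S, hS, hC, hYS⟩
    set g : ℕ → ℕ := fun t => min Y (∑ i ∈ Finset.range t, if i ∈ S then y i else 0) with hg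
    have hgmono : Monotone g := by
      intro a b hab
      exact min_le_min le_rfl (Finset.sum_le_sum_of_subset (Finset.range_subset_range.mpr hab))
    set dn : ℕ → ℕ := fun t => g (t + 1) - g t with hdn
    have key2 : ∀ t, dn t ≤ if t ∈ S then y t else 0 := by
      intro t
      simp only [hdn, hg, Finset.sum_range_succ]
      omega
    have hsum : ∑ t ∈ Finset.range n, dn t = Y := by
      rw [hdn, Finset.sum_range_tsub hgmono]
      simp only [hg, Finset.sum_range_zero, min_zero, Nat.sub_zero]
      rw [Finset.sum_ite_mem, Finset.inter_eq_right.mpr hS]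
      exact min_eq_left hYS
    have hdny : ∀ t, dn t ≤ y t := by
      intro t
      have := key2 t
      split_ifs at this with h
      · exact this
      · omega
    have hd12nn : ∀ i, (0:ℝ) ≤ (if i < n then (B : ℝ) - y i + dn i else 0) := by
      intro i
      split_ifs with h
      · have h1 : (y i : ℝ) ≤ B := by exact_mod_cast hB i h
        have h2 : (0:ℝ) ≤ (dn i : ℝ) := Nat.cast_nonneg _
        linarith
      · exact le_rfl
    have hsumR : ∑ t ∈ Finset.range n, (dn t : ℝ) = (Y : ℝ) := by
      rw [← Nat.cast_sum, hsum]
    have hTot : ∑ i ∈ Finset.range n, (if i < n then (B : ℝ) - y i + dn i else 0)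
        = (∑ i ∈ Finset.range n, ((B : ℝ) - y i)) + Y := by
      rw [Finset.sum_congr rfl (fun i hi => if_pos (Finset.mem_range.mp hi)),
        Finset.sum_add_distrib, hsumR]
    refine ⟨fun t => ∑ i ∈ Finset.Ico (t + 1) n, (if i < n then (B : ℝ) - y i + dn i else 0),
      fun t => ∑ i ∈ Finset.range (t + 1), (dn i : ℝ),
      fun t => if t < n then (B : ℝ) - y t + dn t else 0,
      fun t => (dn t : ℝ), ⟨?_, ?_, ?_, ?_, ?_⟩, ?_⟩
    · intro t
      exact ⟨Finset.sum_nonneg fun i _ => hd12nn i,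
        Finset.sum_nonneg fun i _ => Nat.cast_nonneg _, hd12nn t, Nat.cast_nonneg _⟩
    · intro t ht
      dsimp only
      rw [if_pos ht]
      have hy : (y t : ℝ) ≤ B := by exact_mod_cast hB t ht
      have hd : (dn t : ℝ) ≤ (y t : ℝ) := by exact_mod_cast hdny t
      linarith
    · intro t ht
      dsimp only
      rcases Nat.eq_zero_or_pos t with rfl | htpos
      · rw [if_pos rfl, ← hTot, Finset.range_eq_Ico]
        rcases lt_or_ge (0 + 1) n with h1 | h1
        · rw [if_pos h1, Finset.sum_eq_sum_Ico_succ_bot hn]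
          rw [if_pos (show (0:ℕ) < n from hn)]
          ring
        · have hn1 : n = 1 := by omega
          rw [if_neg (show ¬ (0 + 1 < n) by omega), zero_add, hn1,
            show Finset.Ico 0 1 = {0} from rfl, Finset.sum_singleton]
      · rw [if_neg (show ¬ t = 0 by omega), show t - 1 + 1 = t by omega]
        rcases lt_or_ge (t + 1) n with h1 | h1
        · rw [if_pos h1, Finset.sum_eq_sum_Ico_succ_bot ht, if_pos ht]
          ring
        · have hIco : Finset.Ico t n = {t} := by
            have hnt : n = t + 1 := by omega
            rw [hnt, Finset.Ico_add_one_right_eq_Icc, Finset.Icc_self]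
          rw [if_neg (show ¬ t + 1 < n by omega), hIco, Finset.sum_singleton, zero_add,
            if_pos ht]
    · intro t ht
      dsimp only
      rw [if_pos ht]
    · intro t ht
      dsimp only
      rcases Nat.eq_zero_or_pos t with rfl | htpos
      · rw [if_pos rfl, zero_add, Finset.sum_range_one]
        rcases lt_or_ge (0 + 1) n with h1 | h1
        · rw [if_pos h1, if_neg (show ¬ (0 = n - 1) by omega), add_zero]
        · have hn1 : n = 1 := by omega
          rw [if_neg (show ¬ (0 + 1 < n) by omega), if_pos (show 0 = n - 1 by omega),
            zero_add, ← hsumR, hn1, Finset.sum_range_one]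
      · rw [if_neg (show ¬ t = 0 by omega), show t - 1 + 1 = t by omega,
          ← Finset.sum_range_succ]
        rcases lt_or_ge (t + 1) n with h1 | h1
        · rw [if_pos h1, if_neg (show ¬ (t = n - 1) by omega), add_zero]
        · rw [if_neg (show ¬ (t + 1 < n) by omega), if_pos (show t = n - 1 by omega),
            zero_add, ← hsumR, show n = t + 1 by omega]
    · unfold KnapFlowCost
      dsimp only
      have hle : ∑ t ∈ Finset.range n, (if 0 < ((dn t : ℕ) : ℝ) then (c t : ℝ) else 0)
          ≤ ∑ t ∈ Finset.range n, (if t ∈ S then (c t : ℝ) else 0) := by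
        refine Finset.sum_le_sum fun i _ => ?_
        split_ifs with h1 h2 h2
        · exact le_rfl
        · exfalso
          have hp : 0 < dn i := by exact_mod_cast h1
          have := key2 i
          rw [if_neg h2] at this
          omega
        · positivity
        · exact le_rfl
      refine hle.trans ?_
      rw [Finset.sum_ite_mem, Finset.inter_eq_right.mpr hS, ← Nat.cast_sum]
      exact_mod_cast hC
  · rintro ⟨h1, h3, d12, d23, ⟨hnn, hcap, _, hdem, hc3⟩, hcost⟩
    refine ⟨(Finset.range n).filter (fun t => 0 < d23 t), Finset.filter_subset _ _, ?_, ?_⟩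
    · have heq : KnapFlowCost n c d23
          = ∑ t ∈ (Finset.range n).filter (fun t => 0 < d23 t), (c t : ℝ) := by
        unfold KnapFlowCost
        rw [Finset.sum_filter]
      rw [heq, ← Nat.cast_sum] at hcost
      exact_mod_cast hcost
    · have hsum : ∑ t ∈ Finset.range n, d23 t = (Y : ℝ) := by
        have h := row3_telescope n Y h3 d23 hc3 (n - 1) (by omega)
        rwa [show n - 1 + 1 = n by omega, if_neg (show ¬ n < n from lt_irrefl n)] at h
      have hfil : ∑ t ∈ (Finset.range n).filter (fun t => 0 < d23 t), d23 t
          = ∑ t ∈ Finset.range n, d23 t := by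
        refine Finset.sum_filter_of_ne fun t ht hne => ?_
        exact lt_of_le_of_ne (hnn t).2.2.2 (Ne.symm hne)
      have hbd : ∑ t ∈ (Finset.range n).filter (fun t => 0 < d23 t), d23 t
          ≤ ∑ t ∈ (Finset.range n).filter (fun t => 0 < d23 t), (y t : ℝ) := by
        refine Finset.sum_le_sum fun i hi => ?_
        have hin : i < n := Finset.mem_range.mp (Finset.mem_filter.mp hi).1
        have h12 := hdem i hin
        have hc := hcap i hin
        rw [h12] at hc
        linarith
      have hfin : (Y : ℝ) ≤ ∑ t ∈ (Finset.range n).filter (fun t => 0 < d23 t), (y t : ℝ) := by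
        rw [← hsum, ← hfil]; exact hbd
      rw [← Nat.cast_sum] at hfin
      exact_mod_cast hfin
end

section
/- Consider the grid flow instance with 3 rows and 2n columns built from a knapsack instance (y_i, c_i, Y, C): source v_{1,1} has supply Y, sink v_{3,2n} has demand Y; the forward arc (v_{2,2i−1}, v_{2,2i}) has capacity y_i and fixed-charge cost c_i for nonzero flow; all other usable arcs have zero cost and infinite capacity. Then there exists S ⊆ [n] with Σ_{i∈S} c_i ≤ C and Σ_{i∈S} y_i ≥ Y if and only if the instance admits a feasible flow of cost at most C. -/
/-- Feasibility for the 3-row, `2n`-column grid instance built from a knapsack instance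
(0-indexed columns `t ∈ {0,…,2n−1}`).  Source `v_{1,0}` has supply `Y`, sink `v_{3,2n−1}`
has demand `Y`.  `h1 t`, `h3 t` are flows on row-1 and row-3 forward arcs `t → t+1`;
for `i < n`, `dA i` is the flow on the downward arc `(v_{1,2i},v_{2,2i})`, `g i` the flow on
the capacitated row-2 forward arc `(v_{2,2i},v_{2,2i+1})` (capacity `y i`), and `dB i` the
flow on the downward arc `(v_{2,2i+1},v_{3,2i+1})`.  All other usable arcs are
uncapacitated; all unused arcs are omitted. -/
def KnapFwdFeasible (n : ℕ) (y : ℕ → ℕ) (Y : ℕ) (h1 h3 dA g dB : ℕ → ℝ) : Prop :=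
  (∀ t, 0 ≤ h1 t ∧ 0 ≤ h3 t) ∧ (∀ i, 0 ≤ dA i ∧ 0 ≤ g i ∧ 0 ≤ dB i) ∧
    (∀ i < n, g i ≤ y i) ∧
    (∀ i < n, dA i = g i ∧ g i = dB i) ∧
    (∀ t < 2 * n, (if t = 0 then (Y : ℝ) else h1 (t - 1)) =
      (if t + 1 < 2 * n then h1 t else 0) + (if t % 2 = 0 then dA (t / 2) else 0)) ∧
    (∀ t < 2 * n, (if t = 0 then 0 else h3 (t - 1)) + (if t % 2 = 1 then dB (t / 2) else 0) =
      (if t + 1 < 2 * n then h3 t else 0) + (if t = 2 * n - 1 then (Y : ℝ) else 0))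

/-- Fixed-charge cost: the capacitated arc `(v_{2,2i},v_{2,2i+1})` costs `c i` when carrying
positive flow. -/
noncomputable def KnapFwdCost (n : ℕ) (c : ℕ → ℕ) (g : ℕ → ℝ) : ℝ :=
  ∑ i ∈ Finset.range n, if 0 < g i then (c i : ℝ) else 0

/-- There exists `S ⊆ [n]` with `Σ_{i∈S} cᵢ ≤ C` and `Σ_{i∈S} yᵢ ≥ Y` iff the constructed
grid instance (with arbitrary capacities on forward arcs) admits a feasible flow of cost at
most `C`. -/
theorem knapsack_iff_forward_capacitated_grid_flow (n : ℕ) (hn : 0 < n) (y c : ℕ → ℕ)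
    (Y C : ℕ) (hY : Y ≤ ∑ i ∈ Finset.range n, y i) :
    (∃ S : Finset ℕ, S ⊆ Finset.range n ∧ (∑ i ∈ S, c i) ≤ C ∧ Y ≤ ∑ i ∈ S, y i) ↔
      ∃ h1 h3 dA g dB : ℕ → ℝ, KnapFwdFeasible n y Y h1 h3 dA g dB ∧
        KnapFwdCost n c g ≤ C := by
  constructor
  · rintro ⟨S, hS, hc, hy⟩
    set F : ℕ → ℕ := fun k => min (∑ j ∈ Finset.range k, if j ∈ S then y j else 0) Y with hF
    have Fmono : Monotone F := by
      intro a b hab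
      exact min_le_min (Finset.sum_le_sum_of_subset
        (Finset.range_subset_range.mpr hab)) le_rfl
    have F0 : F 0 = 0 := by simp [hF]
    have FY : ∀ k, F k ≤ Y := fun k => min_le_right _ _
    have hsum0 : (∑ j ∈ Finset.range n, if j ∈ S then y j else 0) = ∑ i ∈ S, y i := by
      rw [← Finset.sum_filter, Finset.filter_mem_eq_inter, Finset.inter_eq_right.mpr hS]
    have Fn : F n = Y := by
      simp only [hF]
      omega
    have Fstep : ∀ i, F (i + 1) ≤ F i + (if i ∈ S then y i else 0) := by
      intro i
      simp only [hF, Finset.sum_range_succ]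
      omega
    refine ⟨fun t => (Y : ℝ) - F (t / 2 + 1), fun t => (F ((t + 1) / 2) : ℝ),
      fun i => (F (i + 1) : ℝ) - F i, fun i => (F (i + 1) : ℝ) - F i,
      fun i => (F (i + 1) : ℝ) - F i, ⟨?_, ?_, ?_, ?_, ?_, ?_⟩, ?_⟩
    · intro t
      constructor
      · have := FY (t / 2 + 1)
        have : ((F (t / 2 + 1) : ℝ)) ≤ (Y : ℝ) := by exact_mod_cast this
        linarith
      · positivity
    · intro i
      have := Fmono (Nat.le_succ i)
      have h : ((F i : ℝ)) ≤ F (i + 1) := by exact_mod_cast this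
      refine ⟨?_, ?_, ?_⟩ <;>
        · show (0 : ℝ) ≤ (F (i + 1) : ℝ) - F i
          linarith
    · intro i _
      have h1 := Fstep i
      have h2 : F i + (if i ∈ S then y i else 0) ≤ F i + y i := by
        split <;> omega
      have h3 : F (i + 1) ≤ F i + y i := le_trans h1 h2
      have : ((F (i + 1) : ℝ)) ≤ (F i : ℝ) + y i := by exact_mod_cast h3
      show (F (i + 1) : ℝ) - F i ≤ (y i : ℝ)
      linarith
    · intro i _; exact ⟨rfl, rfl⟩
    · -- row 1 conservation
      intro t ht
      beta_reduce
      rcases Nat.even_or_odd t with ⟨k, hk⟩ | ⟨k, hk⟩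
      · -- t even, t = k + k
        subst hk
        have hdiv : (k + k) / 2 = k := by omega
        have hmod : (k + k) % 2 = 0 := by omega
        have hlt : k + k + 1 < 2 * n := by omega
        rcases Nat.eq_zero_or_pos k with rfl | hk0
        · rw [if_pos rfl, if_pos hlt, if_pos hmod, hdiv]
          have hF0 : ((F 0 : ℝ)) = 0 := by exact_mod_cast F0
          norm_num
          linarith
        · have hne : k + k ≠ 0 := by omega
          have hdiv2 : (k + k - 1) / 2 + 1 = k := by omega
          rw [if_neg hne, if_pos hlt, if_pos hmod, hdiv, hdiv2]
          ring
      · -- t odd, t = 2k+1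
        subst hk
        have hmod : (2 * k + 1) % 2 ≠ 0 := by omega
        have hdiv2 : (2 * k + 1 - 1) / 2 + 1 = k + 1 := by omega
        have hne : 2 * k + 1 ≠ 0 := by omega
        rw [if_neg hne, if_neg hmod, hdiv2]
        by_cases hlast : 2 * k + 1 + 1 < 2 * n
        · have hdiv : (2 * k + 1) / 2 + 1 = k + 1 := by omega
          rw [if_pos hlast, hdiv]
          ring
        · have hkn : k + 1 = n := by omega
          rw [if_neg hlast, hkn, Fn]
          ring
    · -- row 3 conservation
      intro t ht
      beta_reduce
      rcases Nat.even_or_odd t with ⟨k, hk⟩ | ⟨k, hk⟩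
      · -- t even
        subst hk
        have hmod : (k + k) % 2 ≠ 1 := by omega
        have hlt : k + k + 1 < 2 * n := by omega
        have hne2 : k + k ≠ 2 * n - 1 := by omega
        have hdiv : (k + k + 1) / 2 = k := by omega
        rcases Nat.eq_zero_or_pos k with rfl | hk0
        · rw [if_pos rfl, if_neg hmod, if_pos hlt, if_neg hne2, hdiv]
          have hF0 : ((F 0 : ℝ)) = 0 := by exact_mod_cast F0
          rw [hF0]
        · have hne : k + k ≠ 0 := by omega
          have hdiv2 : (k + k - 1 + 1) / 2 = k := by omega
          rw [if_neg hne, if_neg hmod, if_pos hlt, if_neg hne2, hdiv, hdiv2]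
      · -- t odd
        subst hk
        have hne : 2 * k + 1 ≠ 0 := by omega
        have hmod : (2 * k + 1) % 2 = 1 := by omega
        have hdiv : (2 * k + 1) / 2 = k := by omega
        have hdiv2 : (2 * k + 1 - 1 + 1) / 2 = k := by omega
        rw [if_neg hne, if_pos hmod, hdiv, hdiv2]
        by_cases hlast : 2 * k + 1 + 1 < 2 * n
        · have hne3 : 2 * k + 1 ≠ 2 * n - 1 := by omega
          have hdiv3 : (2 * k + 1 + 1) / 2 = k + 1 := by omega
          rw [if_pos hlast, if_neg hne3, hdiv3]
          ring
        · have heq2 : 2 * k + 1 = 2 * n - 1 := by omega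
          have hkn : k + 1 = n := by omega
          rw [if_neg hlast, if_pos heq2, hkn, Fn]
          ring
    · -- cost
      have hsub : ∀ i ∈ Finset.range n,
          (if 0 < (F (i + 1) : ℝ) - F i then (c i : ℝ) else 0) ≤
            (if i ∈ S then (c i : ℝ) else 0) := by
        intro i _
        by_cases hiS : i ∈ S
        · simp only [if_pos hiS]
          split <;> simp
        · have h1 := Fstep i
          simp only [if_neg hiS] at h1 ⊢
          have h2 : F (i + 1) ≤ F i := by omega
          have h3 : ((F (i + 1) : ℝ)) ≤ F i := by exact_mod_cast h2
          rw [if_neg (by linarith)]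
      calc KnapFwdCost n c (fun i => (F (i + 1) : ℝ) - F i)
          ≤ ∑ i ∈ Finset.range n, if i ∈ S then (c i : ℝ) else 0 :=
            Finset.sum_le_sum hsub
        _ = ∑ i ∈ S, (c i : ℝ) := by
            rw [← Finset.sum_filter, Finset.filter_mem_eq_inter, Finset.inter_eq_right.mpr hS]
        _ ≤ (C : ℝ) := by exact_mod_cast hc
  · rintro ⟨h1, h3, dA, g, dB, ⟨hpos13, hpos, hcap, hAB, hc1, _⟩, hcost⟩
    have key : ∀ t, t < 2 * n →
        (if t + 1 < 2 * n then h1 t else 0) = (Y : ℝ) - ∑ i ∈ Finset.range (t / 2 + 1), dA i := by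
      intro t
      induction t with
      | zero =>
        intro ht
        have h := hc1 0 ht
        have hlt : 0 + 1 < 2 * n := by omega
        rw [if_pos rfl, if_pos hlt, if_pos (by norm_num : (0 : ℕ) % 2 = 0)] at h
        rw [if_pos hlt]
        have hs : ∑ x ∈ Finset.range (0 / 2 + 1), dA x = dA 0 := by simp
        rw [hs]
        linarith
      | succ t ih =>
        intro ht
        have ht' : t < 2 * n := by omega
        have ih' := ih ht'
        rw [if_pos (by omega)] at ih'
        have step := hc1 (t + 1) ht
        rw [if_neg (Nat.succ_ne_zero t)] at step
        simp only [Nat.add_sub_cancel] at step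
        rcases Nat.even_or_odd (t + 1) with ⟨k, hk⟩ | ⟨k, hk⟩
        · -- t+1 even, so t odd, (t+1)/2 = t/2 + 1
          have hmod : (t + 1) % 2 = 0 := by omega
          have hdiv : (t + 1) / 2 = t / 2 + 1 := by omega
          rw [if_pos hmod, hdiv] at step
          rw [hdiv, Finset.sum_range_succ]
          linarith [step, ih']
        · -- t+1 odd, (t+1)/2 = t/2
          have hmod : (t + 1) % 2 ≠ 0 := by omega
          have hdiv : (t + 1) / 2 = t / 2 := by omega
          rw [if_neg hmod] at step
          rw [hdiv]
          linarith [step, ih']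
    have hsum : (∑ i ∈ Finset.range n, g i) = (Y : ℝ) := by
      have h := key (2 * n - 1) (by omega)
      rw [if_neg (by omega)] at h
      have hdiv : (2 * n - 1) / 2 + 1 = n := by omega
      rw [hdiv] at h
      have heq : ∀ i ∈ Finset.range n, dA i = g i := by
        intro i hi
        exact (hAB i (Finset.mem_range.mp hi)).1
      rw [Finset.sum_congr rfl heq] at h
      linarith
    refine ⟨(Finset.range n).filter (fun i => 0 < g i), Finset.filter_subset _ _, ?_, ?_⟩
    · have : ((∑ i ∈ (Finset.range n).filter (fun i => 0 < g i), c i : ℕ) : ℝ) ≤ (C : ℝ) := by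
        push_cast
        rw [Finset.sum_filter]
        exact hcost
      exact_mod_cast this
    · have h1 : (∑ i ∈ Finset.range n, g i) =
          ∑ i ∈ (Finset.range n).filter (fun i => 0 < g i), g i := by
        rw [Finset.sum_filter_of_ne]
        intro i _ hne
        exact lt_of_le_of_ne (hpos i).2.1 (Ne.symm hne)
      have h2 : (∑ i ∈ (Finset.range n).filter (fun i => 0 < g i), g i) ≤
          ∑ i ∈ (Finset.range n).filter (fun i => 0 < g i), (y i : ℝ) := by
        apply Finset.sum_le_sum
        intro i hi
        exact hcap i (Finset.mem_range.mp (Finset.mem_filter.mp hi).1)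
      have : (Y : ℝ) ≤ ((∑ i ∈ (Finset.range n).filter (fun i => 0 < g i), y i : ℕ) : ℝ) := by
        push_cast
        linarith
      exact_mod_cast this
end
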